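/- arXiv:1707.00968 — 4 statements merged into one kernel-verified Lean document; each statement's English description precedes it below -/
import Mathlib

section
/- If f ≥ 0 in a Dedekind complete Riesz space with weak order unit e and ε > 0, then f² ≥ ε² P_{(f-εe)^+} e ≥ 0, where the square is in the f-algebra on the universal completion and P_{(f-εe)^+} is the band projection onto the band generated by (f-εe)^+. -/
open Finset

/-- The universal completion `E^u` of a Dedekind complete Riesz space with weak
order unit `e`, carrying its canonical `f`-algebra structure with `e = 1` the
multiplicative unit and weak order unit. The Riesz space `E` itself is modeled
as a Riesz subspace of `A`. -/
class FRieszSpace (A : Type*) extends CommRing A, Lattice A, Module ℝ A where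
  add_le_add_left' : ∀ a b : A, a ≤ b → ∀ c : A, c + a ≤ c + b
  mul_nonneg' : ∀ a b : A, 0 ≤ a → 0 ≤ b → 0 ≤ a * b
  smul_nonneg' : ∀ (r : ℝ) (a : A), 0 ≤ r → 0 ≤ a → 0 ≤ r • a
  inf_mul_orth : ∀ a b c : A, 0 ≤ c → a ⊓ b = 0 → (a * c) ⊓ b = 0
  one_weak_unit : ∀ a : A, (a ⊔ -a) ⊓ 1 = 0 → a = 0

variable {A : Type*} [FRieszSpace A]

/-- `E` is Dedekind complete: every nonempty subset of `E` bounded above in `E`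
has a supremum in `E`. -/
def DedekindCompleteIn (E : Set A) : Prop :=
  ∀ S : Set A, S ⊆ E → S.Nonempty → (∃ b ∈ E, ∀ x ∈ S, x ≤ b) → ∃ a ∈ E, IsLUB S a

/-- A Riesz subspace of `A` containing the weak order unit `1`. -/
structure IsRieszSubspace (E : Set A) : Prop where
  zero_mem : (0:A) ∈ E
  add_mem : ∀ x y : A, x ∈ E → y ∈ E → x + y ∈ E
  smul_mem : ∀ (r : ℝ) (x : A), x ∈ E → r • x ∈ E
  abs_mem : ∀ x : A, x ∈ E → (x ⊔ -x) ∈ E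
  one_mem : (1:A) ∈ E

/-- A conditional expectation operator on `E`: a positive order continuous
linear projection fixing the weak order unit, with range a Riesz subspace. -/
structure IsCondExpOn (E : Set A) (T : A →ₗ[ℝ] A) : Prop where
  mapsTo : ∀ x ∈ E, T x ∈ E
  positive : ∀ x : A, 0 ≤ x → 0 ≤ T x
  projection : ∀ x : A, T (T x) = T x
  unit : T 1 = 1
  range_abs : ∀ x : A, ∃ y : A, T y = (T x) ⊔ (-(T x))
  orderCont : ∀ (S : Set A) (a : A), S.Nonempty → DirectedOn (· ≤ ·) S → IsLUB S a →
      IsLUB (T '' S) (T a)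

def StrictlyPositive (T : A →ₗ[ℝ] A) : Prop := ∀ x : A, 0 < x → 0 < T x

/-- `E` is `T`-universally complete: every upward directed set in `E₊` whose
image under `T` is order bounded in `A = E^u` has a supremum in `E`. -/
def TUniversallyComplete (E : Set A) (T : A →ₗ[ℝ] A) : Prop :=
  ∀ S : Set A, S ⊆ E → S.Nonempty → DirectedOn (· ≤ ·) S → (∀ x ∈ S, 0 ≤ x) →
    BddAbove (T '' S) → ∃ a ∈ E, IsLUB S a

/-- `L²(T) = {x ∈ E : x² ∈ E}` (squares taken in the `f`-algebra `A = E^u`). -/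
def L2 (E : Set A) : Set A := {x | x ∈ E ∧ x * x ∈ E}

/-- A band projection: an order projection `0 ≤ P ≤ I`, `P² = P`. -/
def IsBandProjection (P : A →ₗ[ℝ] A) : Prop :=
  (∀ x, P (P x) = P x) ∧ ∀ x : A, 0 ≤ x → 0 ≤ P x ∧ P x ≤ x

/-- `P` is the band projection onto the band generated by `u ≥ 0`:
`P x = sup_n (x ⊓ n u)` for `x ≥ 0`. -/
def IsBandProjOnto (P : A →ₗ[ℝ] A) (u : A) : Prop :=
  IsBandProjection P ∧ ∀ x : A, 0 ≤ x → IsLUB {y | ∃ n : ℕ, y = x ⊓ (n • u)} (P x)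

/-- The variance `var(x) = T (x - Tx)²`. -/
def variance (T : A →ₗ[ℝ] A) (x : A) : A := T ((x - T x) * (x - T x))

/-- `f` and `g` are `T`-conditionally independent: there are conditional
expectation operators `Tf`, `Tg` commuting with `T`, with `f`, resp. `g`, in
their ranges, satisfying `Tf ∘ Tg = T = Tg ∘ Tf`. -/
def AreTCondIndep (E : Set A) (T : A →ₗ[ℝ] A) (f g : A) : Prop :=
  ∃ Tf Tg : A →ₗ[ℝ] A, IsCondExpOn E Tf ∧ IsCondExpOn E Tg ∧
    Tf f = f ∧ Tg g = g ∧
    T.comp Tf = T ∧ Tf.comp T = T ∧ T.comp Tg = T ∧ Tg.comp T = T ∧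
    Tf.comp Tg = T ∧ Tg.comp Tf = T

/-- A family of band projections is `T`-conditionally independent: `T`
factorizes over products of the components `P i e` and `(I - P i) e`. -/
def IsTCondIndepProjFamily {ι : Type*} (T : A →ₗ[ℝ] A) (P : ι → A →ₗ[ℝ] A) : Prop :=
  ∀ (s : Finset ι) (c : ι → Bool),
    T (∏ i ∈ s, (if c i then P i 1 else 1 - P i 1)) =
      ∏ i ∈ s, T (if c i then P i 1 else 1 - P i 1)

/-- `e`-uniform convergence of a sequence. -/
def EUnifTendsTo (x : ℕ → A) (l : A) : Prop :=
  ∀ ε : ℝ, 0 < ε → ∃ N : ℕ, ∀ n ≥ N, |x n - l| ≤ ε • (1:A)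

/-- Order convergence of a sequence. -/
def OrderConvergesTo (x : ℕ → A) (l : A) : Prop :=
  ∃ d : ℕ → A, Antitone d ∧ IsGLB (Set.range d) 0 ∧ ∀ n, |x n - l| ≤ d n

/-- `h = e^{-g}` via the functional calculus on `E^e`: for every sequence of
polynomials converging uniformly to `t ↦ exp (-t)` on `[-1,1]`, the
evaluations at `g` converge `e`-uniformly to `h`. -/
def IsExpNeg (g h : A) : Prop :=
  ∀ (d : ℕ → ℕ) (a : ℕ → ℕ → ℝ),
    (∀ ε : ℝ, 0 < ε → ∃ N : ℕ, ∀ k ≥ N, ∀ t ∈ Set.Icc (-1:ℝ) 1,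
        |(∑ i ∈ Finset.range (d k), a k i * t ^ i) - Real.exp (-t)| ≤ ε) →
    EUnifTendsTo (fun k => ∑ i ∈ Finset.range (d k), a k i • g ^ i) h


namespace FRTest
variable {A : Type*} [FRieszSpace A]

instance : AddLeftMono A := ⟨fun c a b h => FRieszSpace.add_le_add_left' a b h c⟩
instance : AddRightMono A :=
  ⟨fun c a b h => by simpa [add_comm] using FRieszSpace.add_le_add_left' a b h c⟩

lemma smul_mono {r : ℝ} (hr : 0 ≤ r) {x y : A} (h : x ≤ y) : r • x ≤ r • y := by
  rw [← sub_nonneg, ← smul_sub]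
  exact FRieszSpace.smul_nonneg' r (y - x) hr (by rwa [sub_nonneg])

lemma smul_mono_scalar {r s : ℝ} (hrs : r ≤ s) {x : A} (hx : 0 ≤ x) : r • x ≤ s • x := by
  rw [← sub_nonneg, ← sub_smul]
  exact FRieszSpace.smul_nonneg' _ _ (by linarith) hx

lemma smul_inf {r : ℝ} (hr : 0 < r) (x y : A) : r • (x ⊓ y) = (r • x) ⊓ (r • y) := by
  refine le_antisymm (le_inf (smul_mono hr.le inf_le_left) (smul_mono hr.le inf_le_right)) ?_
  have h1 : r⁻¹ • ((r • x) ⊓ (r • y)) ≤ x ⊓ y := by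
    refine le_inf ?_ ?_
    · have := smul_mono (by positivity : (0:ℝ) ≤ r⁻¹) (inf_le_left (a := r • x) (b := r • y))
      rwa [smul_smul, inv_mul_cancel₀ hr.ne', one_smul] at this
    · have := smul_mono (by positivity : (0:ℝ) ≤ r⁻¹) (inf_le_right (a := r • x) (b := r • y))
      rwa [smul_smul, inv_mul_cancel₀ hr.ne', one_smul] at this
  have := smul_mono hr.le h1
  rwa [smul_smul, mul_inv_cancel₀ hr.ne', one_smul] at this

lemma disjoint_smul {a b : A} (ha : 0 ≤ a) (hb : 0 ≤ b) (hab : a ⊓ b = 0)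
    {c : ℝ} (hc : 0 < c) : a ⊓ (c • b) = 0 := by
  set M := max c 1 with hM
  have hM1 : (1:ℝ) ≤ M := le_max_right _ _
  have h1 : a ⊓ (c • b) ≤ (M • a) ⊓ (M • b) := by
    refine inf_le_inf ?_ (smul_mono_scalar (le_max_left _ _) hb)
    calc a = (1:ℝ) • a := (one_smul _ _).symm
      _ ≤ M • a := smul_mono_scalar hM1 ha
  have h2 : (M • a) ⊓ (M • b) = 0 := by
    rw [← smul_inf (lt_of_lt_of_le one_pos hM1), hab, smul_zero]
  exact le_antisymm (h1.trans_eq h2)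
    (le_inf ha (FRieszSpace.smul_nonneg' _ _ hc.le hb))

lemma one_nonneg' : (0:A) ≤ 1 := by
  set a := (1:A)⁺ with hadef
  set b := (1:A)⁻ with hbdef
  have hab : a ⊓ b = 0 := posPart_inf_negPart_eq_zero 1
  have hb0 : (0:A) ≤ b := negPart_nonneg 1
  have hsub : a - b = 1 := posPart_sub_negPart 1
  have h := FRieszSpace.inf_mul_orth a b b hb0 hab
  have hab2 : a * b = b + b * b := by
    have ha' : a = 1 + b := by rw [← hsub]; abel
    rw [ha']; ring
  have hble : b ≤ a * b := by
    rw [hab2]; exact le_add_of_nonneg_right (FRieszSpace.mul_nonneg' b b hb0 hb0)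
  have hb' : b = 0 := by
    have : b ⊓ (a * b) = b := inf_eq_left.mpr hble
    rw [inf_comm] at this
    rw [← this, h]
  have : (1:A) = a := by rw [← hsub, hb', sub_zero]
  rw [this]; exact posPart_nonneg 1

lemma inf_add_le {x c d : A} (hx : 0 ≤ x) (hc : 0 ≤ c) (hd : 0 ≤ d) :
    x ⊓ (c + d) ≤ x ⊓ c + x ⊓ d := by
  have h2 : x ⊓ (c + d) - d ≤ x ⊓ c :=
    le_inf (sub_le_iff_le_add.mpr (inf_le_left.trans (le_add_of_nonneg_right hd)))
      (sub_le_iff_le_add.mpr inf_le_right)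
  calc x ⊓ (c + d) ≤ ((x ⊓ c) + x) ⊓ ((x ⊓ c) + d) :=
        le_inf (inf_le_left.trans (le_add_of_nonneg_left (le_inf hx hc)))
          (sub_le_iff_le_add.mp h2)
    _ = x ⊓ c + x ⊓ d := (add_inf x d (x ⊓ c)).symm

end FRTest

namespace FRTest
variable {A : Type*} [FRieszSpace A]

lemma nsmul_nonneg' {x : A} (hx : 0 ≤ x) (K : ℕ) : 0 ≤ K • x := by
  rw [← Nat.cast_smul_eq_nsmul ℝ]
  exact FRieszSpace.smul_nonneg' _ _ (by positivity) hx

lemma inf_nsmul_le {x y : A} (hx : 0 ≤ x) (hy : 0 ≤ y) (K : ℕ) :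
    x ⊓ (K • y) ≤ K • (x ⊓ y) := by
  induction K with
  | zero => simpa using inf_le_right
  | succ K ih =>
      calc x ⊓ ((K + 1) • y) = x ⊓ (K • y + y) := by rw [succ_nsmul]
        _ ≤ x ⊓ (K • y) + x ⊓ y := inf_add_le hx (nsmul_nonneg' hy K) hy
        _ ≤ K • (x ⊓ y) + x ⊓ y := add_le_add_left ih _
        _ = (K + 1) • (x ⊓ y) := (succ_nsmul _ _).symm

lemma mul_eq_zero_of_disjoint {a b : A} (ha : 0 ≤ a) (hb : 0 ≤ b) (hab : a ⊓ b = 0)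
    {K : ℕ} (hbK : b ≤ K • (1:A)) : a * b = 0 := by
  have hab0 : 0 ≤ a * b := FRieszSpace.mul_nonneg' a b ha hb
  have h1 : a * b ≤ K • a := by
    have : a * b ≤ a * (K • (1:A)) := by
      rw [← sub_nonneg, ← mul_sub]
      exact FRieszSpace.mul_nonneg' _ _ ha (by rwa [sub_nonneg])
    calc a * b ≤ a * (K • (1:A)) := this
      _ = K • a := by rw [nsmul_eq_mul, mul_one, mul_comm, ← nsmul_eq_mul]
  have h2 : (a * b) ⊓ a = 0 := by
    have := FRieszSpace.inf_mul_orth b a a ha (by rwa [inf_comm])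
    rwa [mul_comm] at this
  have h3 : a * b ≤ K • ((a * b) ⊓ a) := by
    have := inf_nsmul_le hab0 ha K
    rw [inf_eq_left.mpr h1] at this
    exact this
  rw [h2, smul_zero] at h3
  exact le_antisymm h3 hab0

lemma qsmul_one_mul (q : ℚ) (x : A) : ((q:ℝ) • (1:A)) * x = (q:ℝ) • x := by
  have hd : ((q.den : ℝ)) ≠ 0 := by
    exact_mod_cast (Nat.cast_ne_zero (R := ℝ)).mpr q.den_nz
  have hnum : (q.den : ℝ) * (q : ℝ) = (q.num : ℝ) := by
    have : ((q.den : ℚ) * q) = (q.num : ℚ) := by rw [mul_comm, Rat.mul_den_eq_num]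
    exact_mod_cast this
  have key : (q.den : ℝ) • (((q:ℝ) • (1:A)) * x) = (q.den : ℝ) • ((q:ℝ) • x) := by
    calc (q.den : ℝ) • (((q:ℝ) • (1:A)) * x)
        = (q.den • (((q:ℝ) • (1:A)) * x)) := by rw [Nat.cast_smul_eq_nsmul]
      _ = ((q.den : A) * (((q:ℝ) • (1:A)))) * x := by rw [nsmul_eq_mul, mul_assoc]
      _ = (q.den • ((q:ℝ) • (1:A))) * x := by rw [nsmul_eq_mul]
      _ = (((q.den : ℝ) * (q:ℝ)) • (1:A)) * x := by
            rw [← Nat.cast_smul_eq_nsmul (R := ℝ), smul_smul]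
      _ = ((q.num : ℝ) • (1:A)) * x := by rw [hnum]
      _ = (q.num • (1:A)) * x := by rw [Int.cast_smul_eq_zsmul]
      _ = ((q.num : A) * 1) * x := by rw [zsmul_eq_mul]
      _ = (q.num : A) * x := by rw [mul_one]
      _ = q.num • x := (zsmul_eq_mul _ _).symm
      _ = (q.num : ℝ) • x := (Int.cast_smul_eq_zsmul ℝ _ _).symm
      _ = ((q.den : ℝ) * (q:ℝ)) • x := by rw [hnum]
      _ = (q.den : ℝ) • ((q:ℝ) • x) := by rw [smul_smul]
  have := congrArg (fun z => ((q.den : ℝ))⁻¹ • z) key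
  simpa [smul_smul, inv_mul_cancel₀ hd] using this

end FRTest

namespace FRTest
variable {A : Type*} [FRieszSpace A]

open FRieszSpace in
lemma main_ineq (f : A) (hf0 : 0 ≤ f) (ε : ℝ) (hε : 0 < ε) (n : ℕ) :
    (ε^2 • (1:A)) ⊓ (n • ((f - ε • 1) ⊔ 0)) ≤ f * f := by
  have h1 : (0:A) ≤ 1 := one_nonneg'
  set E : A := ε • 1 with hEdef
  set u : A := (f - ε • 1) ⊔ 0 with hudef
  set v : A := (ε • 1 - f) ⊔ 0 with hvdef
  have hE0 : 0 ≤ E := smul_nonneg' _ _ hε.le h1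
  have hu0 : 0 ≤ u := le_sup_right
  have hv0 : 0 ≤ v := le_sup_right
  have hff : 0 ≤ f * f := mul_nonneg' _ _ hf0 hf0
  by_cases hn : n = 0
  · subst hn
    simp only [zero_smul]
    exact inf_le_right.trans hff
  have hnR : (0:ℝ) < n := by positivity
  -- posPart/negPart identifications
  have hu_eq : u = (f - ε•1)⁺ := by rw [posPart_def]
  have hv_eq : v = (f - ε•1)⁻ := by rw [negPart_def, neg_sub]
  have huv : u ⊓ v = 0 := by rw [hu_eq, hv_eq]; exact posPart_inf_negPart_eq_zero _
  have hfEuv : f = E + u - v := by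
    have h' : u - v = f - ε • 1 := by rw [hu_eq, hv_eq]; exact posPart_sub_negPart _
    calc f = ε•1 + (u - v) := by rw [h']; abel
      _ = E + u - v := by rw [hEdef]; abel
  have hvE : v ≤ E := sup_le (sub_le_self _ hf0) hE0
  have hvK : v ≤ (⌈ε⌉₊ : ℕ) • (1:A) := by
    refine hvE.trans ?_
    rw [hEdef, ← Nat.cast_smul_eq_nsmul ℝ]
    exact smul_mono_scalar (Nat.le_ceil ε) h1
  have huv0 : u * v = 0 := mul_eq_zero_of_disjoint hu0 hv0 huv hvK
  -- rationals
  obtain ⟨q, hq0, hqε⟩ := exists_rat_btwn hε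
  set η : ℝ := min 1 ((q:ℝ)^3 / ((ε+1) * n)) with hη
  have hη0 : 0 < η := lt_min one_pos (by positivity)
  obtain ⟨Q, hQ1, hQ2⟩ := exists_rat_btwn (show ε < ε + η by linarith)
  set δ : ℝ := 2 * (Q:ℝ) * ((Q:ℝ) - ε) with hδ
  have hQle : (Q:ℝ) ≤ ε + 1 := by
    have : η ≤ 1 := min_le_left _ _
    linarith
  have hδ0 : 0 < δ := by nlinarith
  have hδle : δ * (n:ℝ) ≤ 2 * (q:ℝ)^3 := by
    have h₁ : (Q:ℝ) - ε < η := by linarith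
    have h₂ : η ≤ (q:ℝ)^3 / ((ε+1)*n) := min_le_right _ _
    have e1 : ((Q:ℝ)-ε) * n ≤ (q:ℝ)^3/(ε+1) := by
      calc ((Q:ℝ)-ε)*n ≤ ((q:ℝ)^3/((ε+1)*n))*n :=
            mul_le_mul_of_nonneg_right (h₁.le.trans h₂) hnR.le
        _ = (q:ℝ)^3/(ε+1) := by field_simp
    have e2 : δ * n = 2*(Q:ℝ)*(((Q:ℝ)-ε)*n) := by rw [hδ]; ring
    rw [e2]
    calc 2*(Q:ℝ)*(((Q:ℝ)-ε)*(n:ℝ)) ≤ 2*(Q:ℝ)*((q:ℝ)^3/(ε+1)) := by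
          apply mul_le_mul_of_nonneg_left e1 (by linarith)
      _ ≤ 2*(ε+1)*((q:ℝ)^3/(ε+1)) := by
          apply mul_le_mul_of_nonneg_right (by linarith) (by positivity)
      _ = 2*(q:ℝ)^3 := by field_simp
  -- E*E dominates q²•1
  have hq2E : ((q:ℝ)^2) • (1:A) ≤ E * E := by
    have hqq : ((q:ℝ)•(1:A)) * ((q:ℝ)•1) = ((q:ℝ)^2) • 1 := by
      rw [qsmul_one_mul, smul_smul, ← sq]
    have hfactor : (E - (q:ℝ)•1) * (E + (q:ℝ)•1) = E * E - ((q:ℝ)^2) • 1 := by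
      calc (E - (q:ℝ)•1) * (E + (q:ℝ)•1) = E*E - ((q:ℝ)•(1:A))*((q:ℝ)•1) := by ring
        _ = E*E - ((q:ℝ)^2)•1 := by rw [hqq]
    rw [← sub_nonneg, ← hfactor]
    refine mul_nonneg' _ _ ?_ (add_nonneg hE0 (smul_nonneg' _ _ hq0.le h1))
    rw [hEdef, ← sub_smul]
    exact smul_nonneg' _ _ (by linarith) h1
  -- ε²•1 ≤ E*E + δ•1
  have hε2Q : (ε^2) • (1:A) ≤ E*E + δ • 1 := by
    have hQQ : ((Q:ℝ)•(1:A)) * ((Q:ℝ)•1) = ((Q:ℝ)^2)•1 := by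
      rw [qsmul_one_mul, smul_smul, ← sq]
    have hQfact : ((Q:ℝ)•(1:A) - E) * ((Q:ℝ)•1 + E) = ((Q:ℝ)^2)•(1:A) - E*E := by
      calc ((Q:ℝ)•(1:A) - E) * ((Q:ℝ)•1 + E)
          = ((Q:ℝ)•(1:A))*((Q:ℝ)•1) - E*E := by ring
        _ = ((Q:ℝ)^2)•(1:A) - E*E := by rw [hQQ]
    have hQE0 : (0:A) ≤ (Q:ℝ)•(1:A) - E := by
      rw [hEdef, ← sub_smul]
      exact smul_nonneg' _ _ (by linarith) h1
    have hb1 : ((Q:ℝ)•(1:A) - E) * ((Q:ℝ)•1 + E) ≤ ((Q:ℝ)•(1:A) - E) * ((2*(Q:ℝ))•1) := by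
      rw [← sub_nonneg, ← mul_sub]
      refine mul_nonneg' _ _ hQE0 ?_
      have hmod : (2*(Q:ℝ))•(1:A) - ((Q:ℝ)•1 + E) = ((Q:ℝ) - ε)•1 := by
        rw [hEdef]; module
      rw [hmod]
      exact smul_nonneg' _ _ (by linarith) h1
    have hb2 : ((Q:ℝ)•(1:A) - E) * ((2*(Q:ℝ))•1) = δ • 1 := by
      have h2Q : ((2*(Q:ℝ))•(1:A)) * ((Q:ℝ)•(1:A) - E) = (2*(Q:ℝ)) • ((Q:ℝ)•(1:A) - E) := by
        have := qsmul_one_mul (2*Q) ((Q:ℝ)•(1:A) - E)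
        push_cast at this
        exact this
      rw [mul_comm, h2Q, hEdef, ← sub_smul, smul_smul, hδ]
    have hεQ2 : ε^2•(1:A) ≤ ((Q:ℝ)^2)•1 := smul_mono_scalar (by nlinarith) h1
    calc ε^2•(1:A) ≤ ((Q:ℝ)^2)•1 := hεQ2
      _ = E*E + (((Q:ℝ)^2)•(1:A) - E*E) := by abel
      _ = E*E + ((Q:ℝ)•(1:A) - E) * ((Q:ℝ)•1 + E) := by rw [hQfact]
      _ ≤ E*E + ((Q:ℝ)•(1:A) - E) * ((2*(Q:ℝ))•1) := add_le_add_right hb1 _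
      _ = E*E + δ•1 := by rw [hb2]
  set s : A := (ε^2 • (1:A)) ⊓ (n • u) with hs
  have hnu : (n • u : A) = (n:ℝ) • u := (Nat.cast_smul_eq_nsmul ℝ n u).symm
  have hs0 : 0 ≤ s := le_inf (smul_nonneg' _ _ (by positivity) h1) (nsmul_nonneg' hu0 n)
  have step1 : s ≤ E*E + (δ•1 ⊓ ((n:ℝ)•u - E*E)) := by
    have hstep : s ≤ (E*E + δ•1) ⊓ ((n:ℝ)•u) :=
      le_inf (inf_le_left.trans hε2Q) (by rw [← hnu]; exact inf_le_right)
    calc s ≤ (E*E + δ•1) ⊓ ((n:ℝ)•u) := hstep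
      _ = E*E + (δ•1 ⊓ ((n:ℝ)•u - E*E)) := by rw [add_inf]; congr 1; abel
  set X : A := δ•1 ⊓ ((n:ℝ)•u - ((q:ℝ)^2)•1) with hX
  have step2 : δ•1 ⊓ ((n:ℝ)•u - E*E) ≤ X :=
    inf_le_inf_left _ (sub_le_sub_left hq2E _)
  -- the lattice lemma : X ≤ (2q)•u
  have hq2 : (0:ℝ) < 2*(q:ℝ)/n := by positivity
  set z : A := (n:ℝ)•u - ((q:ℝ)^2)•1 with hz
  set a : A := z ⊔ 0 with ha
  set b : A := (-z) ⊔ 0 with hb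
  have hab : a ⊓ b = 0 := by
    rw [ha, hb, ← posPart_def, ← negPart_def]
    exact posPart_inf_negPart_eq_zero z
  have ha0 : 0 ≤ a := le_sup_right
  have hb0 : 0 ≤ b := le_sup_right
  have hXle : X ≤ (2*(q:ℝ))•u := by
    set t : A := (X - (2*(q:ℝ))•u) ⊔ 0 with ht
    have h2qu0 : 0 ≤ (2*(q:ℝ))•u := smul_nonneg' _ _ (by positivity) hu0
    have hta : t ≤ a :=
      sup_le ((sub_le_self _ h2qu0).trans (inf_le_right.trans le_sup_left)) le_sup_right
    have htb : t ≤ (2*(q:ℝ)/n)•b := by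
      have c1 : (2*(q:ℝ)/n) * (δ*(n:ℝ)/(2*(q:ℝ))) = δ := by field_simp
      have c2 : (2*(q:ℝ)/n) * (n:ℝ) = 2*(q:ℝ) := by field_simp
      have e1 : δ•(1:A) - (2*(q:ℝ))•u
          = (2*(q:ℝ)/n)•((δ*(n:ℝ)/(2*(q:ℝ)))•(1:A) - (n:ℝ)•u) := by
        rw [smul_sub, smul_smul, smul_smul, c1, c2]
      have e2 : (δ*(n:ℝ)/(2*(q:ℝ)))•(1:A) ≤ ((q:ℝ)^2)•1 := by
        refine smul_mono_scalar ?_ h1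
        rw [div_le_iff₀ (by positivity)]
        nlinarith
      have e3 : ((q:ℝ)^2)•(1:A) - (n:ℝ)•u = -z := by rw [hz]; abel
      have hkey : X - (2*(q:ℝ))•u ≤ (2*(q:ℝ)/n)•b := by
        calc X - (2*(q:ℝ))•u ≤ δ•1 - (2*(q:ℝ))•u := sub_le_sub_right inf_le_left _
          _ = (2*(q:ℝ)/n)•((δ*(n:ℝ)/(2*(q:ℝ)))•(1:A) - (n:ℝ)•u) := e1
          _ ≤ (2*(q:ℝ)/n)•(((q:ℝ)^2)•(1:A) - (n:ℝ)•u) :=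
              smul_mono hq2.le (sub_le_sub_right e2 _)
          _ = (2*(q:ℝ)/n)•(-z) := by rw [e3]
          _ ≤ (2*(q:ℝ)/n)•b := smul_mono hq2.le le_sup_left
      exact sup_le hkey (smul_nonneg' _ _ hq2.le hb0)
    have ht0 : t ≤ 0 := by
      have hti : t ≤ a ⊓ ((2*(q:ℝ)/n)•b) := le_inf hta htb
      rwa [disjoint_smul ha0 hb0 hab hq2] at hti
    have : X - (2*(q:ℝ))•u ≤ 0 := le_sup_left.trans ht0
    exact sub_nonpos.mp this
  have h2qEu : (2*(q:ℝ))•u ≤ E*u + E*u := by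
    have hq1u : (q:ℝ)•u ≤ E*u := by
      have hh : E*u - ((q:ℝ)•(1:A))*u = (E - (q:ℝ)•1)*u := by ring
      rw [← sub_nonneg, show E*u - (q:ℝ)•u = (E - (q:ℝ)•1)*u by rw [← hh, qsmul_one_mul]]
      refine mul_nonneg' _ _ ?_ hu0
      rw [hEdef, ← sub_smul]
      exact smul_nonneg' _ _ (by linarith) h1
    calc (2*(q:ℝ))•u = (q:ℝ)•u + (q:ℝ)•u := by rw [← add_smul]; ring_nf
      _ ≤ E*u + E*u := add_le_add hq1u hq1u
  have hsY : s ≤ E*E + (E*u + E*u) :=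
    step1.trans (add_le_add_right ((step2.trans hXle).trans h2qEu) _)
  -- the disjoint piece m
  set m : A := v * (E + E - v) with hm
  have hEv0 : (0:A) ≤ E + E - v :=
    sub_nonneg.mpr (hvE.trans (le_add_of_nonneg_left hE0))
  have hm0 : 0 ≤ m := mul_nonneg' _ _ hv0 hEv0
  have hvs : v ⊓ s = 0 := by
    have hvu' : v ⊓ ((n:ℝ)•u) = 0 :=
      disjoint_smul hv0 hu0 (by rw [inf_comm]; exact huv) hnR
    refine le_antisymm ?_ (le_inf hv0 hs0)
    calc v ⊓ s ≤ v ⊓ ((n:ℝ)•u) := inf_le_inf_left v (inf_le_right.trans_eq hnu)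
      _ = 0 := hvu'
  have hms : m ⊓ s = 0 := inf_mul_orth v s (E+E-v) hEv0 hvs
  have hmY : m ≤ E*E + (E*u + E*u) := by
    have hEm : E*E - m = (E - v)*(E - v) := by rw [hm]; ring
    have h' : m ≤ E*E := by
      rw [← sub_nonneg, hEm]
      exact mul_nonneg' _ _ (sub_nonneg.mpr hvE) (sub_nonneg.mpr hvE)
    exact h'.trans (le_add_of_nonneg_right
      (add_nonneg (mul_nonneg' _ _ hE0 hu0) (mul_nonneg' _ _ hE0 hu0)))
  have hsum : s + m ≤ E*E + (E*u + E*u) := by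
    have hias : s ⊓ m + (s ⊔ m) = s + m := inf_add_sup s m
    rw [← hias, show s ⊓ m = 0 by rw [inf_comm]; exact hms, zero_add]
    exact sup_le hsY hmY
  have hfin1 : s ≤ E*E + (E*u + E*u) - m := le_sub_iff_add_le.mpr hsum
  have hkey : E*E + (E*u + E*u) - m = f*f + (u*v + u*v) - u*u := by
    rw [hfEuv, hm]; ring
  calc s ≤ E*E + (E*u + E*u) - m := hfin1
    _ = f*f + (u*v + u*v) - u*u := hkey
    _ = f*f - u*u := by rw [huv0]; ring
    _ ≤ f*f := sub_le_self _ (mul_nonneg' _ _ hu0 hu0)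

end FRTest


/-- For `f ≥ 0` and `ε > 0`: `f² ≥ ε² P_{(f-εe)⁺} e ≥ 0`. -/
theorem sq_ge_band_proj {A : Type*} [FRieszSpace A]
    (f : A) (hf0 : 0 ≤ f) (ε : ℝ) (hε : 0 < ε)
    (P : A →ₗ[ℝ] A) (hP : IsBandProjOnto P ((f - ε • 1) ⊔ 0)) :
    ε ^ 2 • P 1 ≤ f * f ∧ 0 ≤ ε ^ 2 • P (1:A) := by
  constructor
  · have hlub := hP.2 (ε^2 • (1:A))
      (FRieszSpace.smul_nonneg' _ _ (by positivity) FRTest.one_nonneg')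
    have hub : f*f ∈ upperBounds
        {y | ∃ n : ℕ, y = (ε^2 • (1:A)) ⊓ (n • ((f - ε • 1) ⊔ 0))} := by
      rintro y ⟨n, rfl⟩
      exact FRTest.main_ineq f hf0 ε hε n
    have hle := hlub.2 hub
    rwa [map_smul] at hle
  · exact FRieszSpace.smul_nonneg' _ _ (by positivity)
      ((hP.1.2 1 FRTest.one_nonneg').1)
end

section
/- Let (P_j)_{j=1}^n be T-conditionally independent band projections with TP_j e = f, and S_n = Σ_{j=1}^n P_j e. Then var(S_n) = n f(e-f). -/
open Finset

variable {A : Type*} [FRieszSpace A]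

section Aux

variable {A : Type*} [FRieszSpace A]

instance : AddLeftMono A := ⟨fun c a b h => FRieszSpace.add_le_add_left' a b h c⟩

theorem FRS.zero_le_one : (0:A) ≤ 1 := by
  have h1 : (1:A)⁺ ⊓ (1:A)⁻ = 0 := posPart_inf_negPart_eq_zero 1
  have h2 : ((1:A)⁺ * (1:A)⁻) ⊓ (1:A)⁻ = 0 :=
    FRieszSpace.inf_mul_orth _ _ _ (negPart_nonneg 1) h1
  have hdec : (1:A)⁺ = 1 + (1:A)⁻ := eq_add_of_sub_eq (posPart_sub_negPart (1:A))
  have hv : (0:A) ≤ (1:A)⁻ * (1:A)⁻ :=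
    FRieszSpace.mul_nonneg' _ _ (negPart_nonneg 1) (negPart_nonneg 1)
  have hle : (1:A)⁻ ≤ (1:A)⁺ * (1:A)⁻ := by
    have : (1:A)⁺ * (1:A)⁻ = (1:A)⁻ + (1:A)⁻ * (1:A)⁻ := by
      rw [hdec]; ring
    rw [this]; exact le_add_of_nonneg_right hv
  have : (1:A)⁻ = 0 := (inf_eq_right.mpr hle).symm.trans h2
  exact negPart_eq_zero.mp this

theorem FRS.add_inf (a b c : A) : a + (b ⊓ c) = (a + b) ⊓ (a + c) := by
  apply le_antisymm
  · exact le_inf (add_le_add_right inf_le_left a) (add_le_add_right inf_le_right a)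
  · have h : (a + b) ⊓ (a + c) - a ≤ b ⊓ c := by
      refine le_inf ?_ ?_ <;> rw [sub_le_iff_le_add]
      · exact le_of_le_of_eq inf_le_left (add_comm a b)
      · exact le_of_le_of_eq inf_le_right (add_comm a c)
    have := add_le_add_right h a
    simpa using this

theorem FRS.inf_add_le {u p q : A} (hu : 0 ≤ u) (hp : 0 ≤ p) (hq : 0 ≤ q) :
    u ⊓ (p + q) ≤ u ⊓ p + u ⊓ q := by
  have h1 : u ⊓ p + u ⊓ q = ((u ⊓ p + u) ⊓ (u ⊓ p + q)) := FRS.add_inf _ _ _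
  have h2 : (u ⊓ p) + u = (u + u) ⊓ (p + u) := by
    rw [add_comm, FRS.add_inf]; ring_nf
  have h3 : (u ⊓ p) + q = (u + q) ⊓ (p + q) := by
    rw [add_comm, FRS.add_inf]; ring_nf
  rw [h1, h2, h3]
  refine le_inf (le_inf ?_ ?_) (le_inf ?_ ?_) <;>
    [exact le_trans inf_le_left (le_add_of_nonneg_right hu);
     exact le_trans inf_le_left (le_add_of_nonneg_left hp);
     exact le_trans inf_le_left (le_add_of_nonneg_right hq);
     exact inf_le_right]

/-- If `p ⊓ (1 - p) = 0` with `0 ≤ p ≤ 1` then `p * (1 - p) = 0`. -/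
theorem FRS.mul_compl_eq_zero {p : A} (hp : 0 ≤ p) (hp1 : p ≤ 1)
    (hdisj : p ⊓ (1 - p) = 0) : p * (1 - p) = 0 := by
  set q : A := 1 - p with hq
  have hq0 : 0 ≤ q := sub_nonneg.mpr hp1
  have hu0 : 0 ≤ p * q := FRieszSpace.mul_nonneg' _ _ hp hq0
  have h1 : (p * q) ⊓ q = 0 := FRieszSpace.inf_mul_orth _ _ _ hq0 hdisj
  have h2 : (p * q) ⊓ p = 0 := by
    have := FRieszSpace.inf_mul_orth q p p hp (by rw [inf_comm]; exact hdisj)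
    rwa [mul_comm] at this
  have hsum : p + q = 1 := by rw [hq]; ring
  have h3 : (p * q) ⊓ 1 = 0 := by
    apply le_antisymm
    · calc (p * q) ⊓ 1 = (p * q) ⊓ (p + q) := by rw [hsum]
        _ ≤ (p * q) ⊓ p + (p * q) ⊓ q := FRS.inf_add_le hu0 hp hq0
        _ = 0 := by rw [h1, h2, add_zero]
    · exact le_inf hu0 FRS.zero_le_one
  apply FRieszSpace.one_weak_unit
  rwa [sup_eq_left.mpr (le_trans (neg_nonpos.mpr hu0) hu0)]

/-- For a band projection `P`, `P 1` is a component of `1`. -/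
theorem FRS.bandProj_disj {P : A →ₗ[ℝ] A} (hP : IsBandProjection P) :
    P 1 ⊓ (1 - P 1) = 0 := by
  obtain ⟨hidem, hpos⟩ := hP
  have h01 : (0:A) ≤ 1 := FRS.zero_le_one
  obtain ⟨hp0, hp1⟩ := hpos 1 h01
  set w : A := P 1 ⊓ (1 - P 1) with hw
  have hw0 : 0 ≤ w := le_inf hp0 (sub_nonneg.mpr hp1)
  have hPw : P w = 0 := by
    have hsub : 0 ≤ (1 - P 1) - w := sub_nonneg.mpr inf_le_right
    have h := (hpos _ hsub).1
    rw [map_sub, map_sub, hidem 1, sub_self, zero_sub] at h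
    have hPw0 : (0:A) ≤ P w := (hpos w hw0).1
    exact le_antisymm (neg_nonneg.mp h) hPw0
  have hx : 0 ≤ P 1 - w := sub_nonneg.mpr inf_le_left
  have h2 := (hpos _ hx).2
  rw [map_sub, hidem 1, hPw, sub_zero] at h2
  exact le_antisymm ((le_sub_self_iff (P 1)).mp h2) hw0

theorem FRS.bandProj_idem {P : A →ₗ[ℝ] A} (hP : IsBandProjection P) :
    P 1 * P 1 = P 1 := by
  have h01 : (0:A) ≤ 1 := FRS.zero_le_one
  obtain ⟨hp0, hp1⟩ := hP.2 1 h01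
  have := FRS.mul_compl_eq_zero hp0 hp1 (FRS.bandProj_disj hP)
  have h : P 1 - P 1 * P 1 = 0 := by rw [← mul_one_sub]; exact this
  exact (sub_eq_zero.mp h).symm

end Aux

/-- `var(S_n) = n f (e - f)`, where `var(g) = Tg² - (Tg)²`. -/
theorem bernoulli_variance {A : Type*} [FRieszSpace A] (E : Set A) (hE : IsRieszSubspace E)
    (T : A →ₗ[ℝ] A) (hT : IsCondExpOn E T) (hTsp : StrictlyPositive T)
    (hTU : TUniversallyComplete E T)
    (P : ℕ → A →ₗ[ℝ] A) (hP : ∀ j, IsBandProjection (P j))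
    (hPE : ∀ j, P j 1 ∈ E)
    (hind : IsTCondIndepProjFamily T P)
    (f : A) (hPf : ∀ j, T (P j 1) = f) (n : ℕ)
    (Sn : A) (hSn : Sn = ∑ k ∈ Finset.range n, P k 1) :
    T (Sn * Sn) - T Sn * T Sn = n • (f * (1 - f)) := by
  classical
  set p : ℕ → A := fun j => P j 1 with hp
  -- T Sn = n • f
  have hTSn : T Sn = n • f := by
    rw [hSn, map_sum]
    simp only [hPf, Finset.sum_const, Finset.card_range]
  -- values of T on products
  have hkey : ∀ j k : ℕ, T (p j * p k) = f * f + (if j = k then f - f * f else 0) := by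
    intro j k
    by_cases hjk : j = k
    · subst hjk
      rw [FRS.bandProj_idem (hP j), hPf j]
      simp
    · have := hind {j, k} (fun _ => true)
      simp only [if_pos] at this
      rw [Finset.prod_pair hjk, Finset.prod_pair hjk] at this
      simp only [hp, this, hPf, if_neg hjk, add_zero]
  have hsq : T (Sn * Sn) = n • (n • (f * f) + (f - f * f)) := by
    rw [hSn, Finset.sum_mul_sum, map_sum]
    have : ∀ j ∈ Finset.range n, T (∑ k ∈ Finset.range n, P j 1 * P k 1)
        = n • (f * f) + (f - f * f) := by
      intro j hj
      rw [map_sum]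
      calc (∑ k ∈ Finset.range n, T (P j 1 * P k 1))
          = ∑ k ∈ Finset.range n, (f * f + (if j = k then f - f * f else 0)) := by
            refine Finset.sum_congr rfl fun k _ => ?_
            exact hkey j k
        _ = n • (f * f) + (f - f * f) := by
            rw [Finset.sum_add_distrib, Finset.sum_const, Finset.card_range,
              Finset.sum_ite_eq, if_pos hj]
    rw [Finset.sum_congr rfl this, Finset.sum_const, Finset.card_range]
  rw [hsq, hTSn]
  simp only [nsmul_eq_mul]
  ring
end

section
/- For g in the principal ideal E^e of a Dedekind complete Riesz space E generated by the weak order unit e, the sequence (e - g/n)^n converges e-uniformly as n → ∞ to the element e^{-g} defined via the functional calculus applied to t ↦ exp(-t) on [-1,1]. -/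
open Finset

variable {A : Type*} [FRieszSpace A]

section ExpAux
variable {R : Type*} [CommRing R] [Module ℝ R]
lemma inv_nat_smul_mul (n : ℕ) (a b : R) :
    ((n:ℝ)⁻¹ • a) * b = (n:ℝ)⁻¹ • (a * b) := by
  rcases eq_or_ne (n:ℝ) 0 with hn | hn
  · rw [hn, inv_zero, zero_smul, zero_smul, zero_mul]
  · have h2 : (n:ℝ) • (((n:ℝ)⁻¹ • a) * b) = a * b := by
      rw [Nat.cast_smul_eq_nsmul, nsmul_eq_mul, ← mul_assoc, ← nsmul_eq_mul,
        ← Nat.cast_smul_eq_nsmul ℝ, smul_smul, mul_inv_cancel₀ hn, one_smul]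
    calc ((n:ℝ)⁻¹ • a) * b
        = (n:ℝ)⁻¹ • ((n:ℝ) • (((n:ℝ)⁻¹ • a) * b)) := by
          rw [smul_smul, inv_mul_cancel₀ hn, one_smul]
      _ = (n:ℝ)⁻¹ • (a * b) := by rw [h2]

lemma neg_inv_nat_smul_mul (n : ℕ) (a b : R) :
    ((-(n:ℝ)⁻¹) • a) * b = (-(n:ℝ)⁻¹) • (a * b) := by
  rw [neg_smul, neg_smul, neg_mul, inv_nat_smul_mul]

lemma pow_smul_mul {r : ℝ} (H : ∀ a b : R, (r • a) * b = r • (a * b))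
    (i : ℕ) (a b : R) : (r ^ i • a) * b = r ^ i • (a * b) := by
  induction i generalizing a b with
  | zero => rw [pow_zero, one_smul, one_smul]
  | succ i ih =>
      rw [pow_succ, mul_smul, ih, H, ← mul_smul]

lemma smul_pow_eq {r : ℝ} (H : ∀ a b : R, (r • a) * b = r • (a * b))
    (g : R) (i : ℕ) : (r • g) ^ i = r ^ i • g ^ i := by
  induction i with
  | zero => rw [pow_zero, pow_zero, pow_zero, one_smul]
  | succ i ih =>
      rw [pow_succ, ih, pow_smul_mul H, mul_comm, H, mul_comm,
        ← mul_smul, ← pow_succ, pow_succ g]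

lemma expand_A (g : R) (k : ℕ) :
    (1 - (k:ℝ)⁻¹ • g) ^ k
      = ∑ i ∈ Finset.range (k+1), ((k.choose i : ℝ) * (-(k:ℝ)⁻¹) ^ i) • g ^ i := by
  have H : ∀ a b : R, ((-(k:ℝ)⁻¹) • a) * b = (-(k:ℝ)⁻¹) • (a * b) :=
    neg_inv_nat_smul_mul k
  have h1 : (1 : R) - (k:ℝ)⁻¹ • g = (-(k:ℝ)⁻¹) • g + 1 := by
    rw [neg_smul]; abel
  rw [h1, add_pow]
  refine Finset.sum_congr rfl fun i _ => ?_
  rw [one_pow, mul_one, smul_pow_eq H, mul_comm, ← nsmul_eq_mul,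
    ← Nat.cast_smul_eq_nsmul ℝ, smul_smul]

lemma real_expand (k : ℕ) (t : ℝ) :
    ∑ i ∈ Finset.range (k+1), ((k.choose i : ℝ) * (-(k:ℝ)⁻¹) ^ i) * t ^ i
      = (1 - (k:ℝ)⁻¹ * t) ^ k := by
  have h1 : (1:ℝ) - (k:ℝ)⁻¹ * t = (-(k:ℝ)⁻¹) * t + 1 := by ring
  rw [h1, add_pow]
  refine Finset.sum_congr rfl fun i _ => ?_
  rw [mul_pow, one_pow, mul_one]; ring

lemma unif_conv (ε : ℝ) (hε : 0 < ε) :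
    ∃ N : ℕ, ∀ k ≥ N, ∀ t ∈ Set.Icc (-1:ℝ) 1,
      |(1 - (k:ℝ)⁻¹ * t) ^ k - Real.exp (-t)| ≤ ε := by
  refine ⟨max 4 (⌈4 * Real.exp 1 / ε⌉₊ + 1), fun k hk t ht => ?_⟩
  have hk4 : (4:ℝ) ≤ (k:ℝ) := by
    exact_mod_cast le_trans (le_max_left _ _) hk
  have hk0 : (0:ℝ) < (k:ℝ) := by linarith
  have hkne : (k:ℝ) ≠ 0 := ne_of_gt hk0
  have habs_t : |t| ≤ 1 := abs_le.2 ⟨ht.1, ht.2⟩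
  set u : ℝ := (k:ℝ)⁻¹ * t with hu_def
  have hu : |u| ≤ (k:ℝ)⁻¹ := by
    rw [hu_def, abs_mul, abs_inv, abs_of_pos hk0]
    calc (k:ℝ)⁻¹ * |t| ≤ (k:ℝ)⁻¹ * 1 := by
          exact mul_le_mul_of_nonneg_left habs_t (by positivity)
      _ = (k:ℝ)⁻¹ := mul_one _
  have hkinv : (k:ℝ)⁻¹ ≤ 1/4 := by
    rw [inv_le_comm₀ hk0 (by norm_num)]; linarith
  have huhalf : |u| ≤ 1/2 := le_trans hu (by linarith)
  have hu1 : |u| < 1 := lt_of_le_of_lt huhalf (by norm_num)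
  -- log bound
  have hlog := Real.abs_log_sub_add_sum_range_le hu1 1
  have hsum : ∑ i ∈ Finset.range 1, u ^ (i+1) / (i+1) = u := by simp
  rw [hsum] at hlog
  have hlog2 : |u + Real.log (1 - u)| ≤ 2 / (k:ℝ)^2 := by
    refine le_trans hlog ?_
    have h1 : |u| ^ 2 ≤ ((k:ℝ)⁻¹) ^ 2 := by
      exact pow_le_pow_left₀ (abs_nonneg u) hu 2
    have h2 : (1:ℝ)/2 ≤ 1 - |u| := by linarith
    calc |u| ^ (1+1) / (1 - |u|) ≤ ((k:ℝ)⁻¹)^2 / (1/2) := by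
          refine div_le_div₀ (by positivity) h1 (by norm_num) h2
      _ = 2 / (k:ℝ)^2 := by
          rw [div_div_eq_mul_div, inv_pow]
          field_simp
  set L : ℝ := Real.log (1 - u) with hL_def
  have htku : t = (k:ℝ) * u := by
    rw [hu_def, ← mul_assoc, mul_inv_cancel₀ hkne, one_mul]
  have hdelta : |(k:ℝ) * L + t| ≤ 2 / (k:ℝ) := by
    have : (k:ℝ) * L + t = (k:ℝ) * (u + L) := by rw [htku]; ring
    rw [this, abs_mul, abs_of_pos hk0]
    calc (k:ℝ) * |u + L| ≤ (k:ℝ) * (2 / (k:ℝ)^2) := by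
          exact mul_le_mul_of_nonneg_left hlog2 (le_of_lt hk0)
      _ = 2 / (k:ℝ) := by field_simp
  have hpos : 0 < 1 - u := by
    have := abs_le.1 huhalf
    linarith
  have hexp : (1 - u) ^ k = Real.exp ((k:ℝ) * L) := by
    rw [hL_def, Real.exp_nat_mul, Real.exp_log hpos]
  have hdelta1 : |(k:ℝ) * L + t| ≤ 1 := by
    refine le_trans hdelta ?_
    rw [div_le_one hk0]; linarith
  have hsplit : Real.exp ((k:ℝ)*L) - Real.exp (-t)
      = Real.exp (-t) * (Real.exp ((k:ℝ)*L + t) - 1) := by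
    rw [mul_sub, ← Real.exp_add, mul_one]
    ring_nf
  have hexpt : Real.exp (-t) ≤ Real.exp 1 :=
    Real.exp_le_exp.2 (by linarith [(abs_le.1 habs_t).1])
  have key : |(1 - u) ^ k - Real.exp (-t)| ≤ 4 * Real.exp 1 / (k:ℝ) := by
    rw [hexp, hsplit, abs_mul, abs_of_pos (Real.exp_pos _)]
    calc Real.exp (-t) * |Real.exp ((k:ℝ)*L + t) - 1|
        ≤ Real.exp 1 * (2 * |(k:ℝ)*L + t|) := by
          exact mul_le_mul hexpt (Real.abs_exp_sub_one_le hdelta1)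
            (abs_nonneg _) (le_of_lt (Real.exp_pos _))
      _ ≤ Real.exp 1 * (2 * (2 / (k:ℝ))) := by
          refine mul_le_mul_of_nonneg_left ?_ (le_of_lt (Real.exp_pos _))
          linarith
      _ = 4 * Real.exp 1 / (k:ℝ) := by field_simp; ring
  refine le_trans key ?_
  have hkb : 4 * Real.exp 1 / ε ≤ (k:ℝ) := by
    have h1 : (⌈4 * Real.exp 1 / ε⌉₊ : ℝ) ≤ (k:ℝ) := by
      have : ⌈4 * Real.exp 1 / ε⌉₊ ≤ k :=
        le_trans (Nat.le_succ _) (le_trans (le_max_right _ _) hk)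
      exact_mod_cast this
    exact le_trans (Nat.le_ceil _) h1
  rw [div_le_iff₀ hk0]
  calc 4 * Real.exp 1 = (4 * Real.exp 1 / ε) * ε := by field_simp
    _ ≤ (k:ℝ) * ε := by
        exact mul_le_mul_of_nonneg_right hkb (le_of_lt hε)
    _ = ε * (k:ℝ) := mul_comm _ _

end ExpAux

/-- For `g` in the principal ideal generated by the unit (`|g| ≤ e`),
`(e - g/n)^n → e^{-g}` `e`-uniformly, where `e^{-g}` is given by the
functional calculus for `t ↦ exp(-t)` on `[-1,1]`. -/
theorem exp_neg_limit {A : Type*} [FRieszSpace A]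
    (g : A) (hg : |g| ≤ 1)
    (h : A) (hh : IsExpNeg g h) :
    EUnifTendsTo (fun n => (1 - (n:ℝ)⁻¹ • g) ^ n) h := by
  have hunif : ∀ ε : ℝ, 0 < ε → ∃ N : ℕ, ∀ k ≥ N, ∀ t ∈ Set.Icc (-1:ℝ) 1,
      |(∑ i ∈ Finset.range ((fun k => k+1) k),
          (fun k i => (Nat.choose k i : ℝ) * (-(k:ℝ)⁻¹) ^ i) k i * t ^ i)
        - Real.exp (-t)| ≤ ε := by
    intro ε hε
    obtain ⟨N, hN⟩ := unif_conv ε hε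
    exact ⟨N, fun k hk t ht => by
      simpa only [real_expand] using hN k hk t ht⟩
  have key := hh (fun k => k+1)
    (fun k i => (Nat.choose k i : ℝ) * (-(k:ℝ)⁻¹) ^ i) hunif
  have hfun : (fun k => ∑ i ∈ Finset.range ((fun k => k+1) k),
      (fun k i => (Nat.choose k i : ℝ) * (-(k:ℝ)⁻¹) ^ i) k i • g ^ i)
      = fun n : ℕ => (1 - (n:ℝ)⁻¹ • g) ^ n := by
    funext k
    exact (expand_A g k).symm
  rwa [hfun] at key
end

section
/- If T is a conditional expectation on a Dedekind complete Riesz space E with weak order unit, B is the band generated by 0 ≤ g ∈ R(T), and P is the band projection onto B, then TP = PT. -/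
section Aux

variable {A : Type*} [AddCommGroup A] [Lattice A] [Module ℝ A]
  [CovariantClass A A (· + ·) (· ≤ ·)]

/-- Inf with a fixed element distributes over least upper bounds in a
lattice-ordered group. -/
lemma aux_isLUB_inf {S : Set A} {a : A} (h : A) (hS : IsLUB S a) :
    IsLUB ((fun s => s ⊓ h) '' S) (a ⊓ h) := by
  constructor
  · rintro _ ⟨s, hs, rfl⟩
    exact inf_le_inf_right h (hS.1 hs)
  · intro u hu
    have hub : ∀ s ∈ S, s ≤ u + (a ⊔ h) - h := by
      intro s hs
      have h1 : s ⊓ h + (s ⊔ h) = s + h := inf_add_sup s h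
      have h2 : s ⊓ h ≤ u := hu ⟨s, hs, rfl⟩
      have h3 : s ⊔ h ≤ a ⊔ h := sup_le_sup_right (hS.1 hs) h
      have : s + h ≤ u + (a ⊔ h) := by
        rw [← h1]; exact add_le_add h2 h3
      exact le_sub_iff_add_le.mpr this
    have ha : a ≤ u + (a ⊔ h) - h := hS.2 hub
    have h1 : a ⊓ h + (a ⊔ h) = a + h := inf_add_sup a h
    have : a + h ≤ u + (a ⊔ h) := by
      have := add_le_add ha (le_refl h)
      simpa using this
    calc a ⊓ h = a + h - (a ⊔ h) := by rw [← h1]; abel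
    _ ≤ u + (a ⊔ h) - (a ⊔ h) := by
        exact sub_le_sub_right this _
    _ = u := by abel

/-- Subadditivity of the infimum with a nonnegative element. -/
lemma aux_inf_add_le {a b c : A} (ha : 0 ≤ a) (hb : 0 ≤ b) (hc : 0 ≤ c) :
    a ⊓ (b + c) ≤ a ⊓ b + a ⊓ c := by
  have h1 : a ⊓ (b + c) ≤ a ⊓ b + c := by
    calc a ⊓ (b + c) ≤ (a + c) ⊓ (b + c) :=
          inf_le_inf_right _ (le_add_of_nonneg_right hc)
    _ = a ⊓ b + c := by rw [add_comm a c, add_comm b c, ← add_inf, add_comm]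
  have h2 : a ⊓ (b + c) ≤ a ⊓ b + a := by
    calc a ⊓ (b + c) ≤ a := inf_le_left
    _ ≤ a ⊓ b + a := le_add_of_nonneg_left (le_inf ha hb)
  have : a ⊓ (b + c) - a ⊓ b ≤ a ⊓ c :=
    le_inf (sub_le_iff_le_add'.mpr h2) (sub_le_iff_le_add'.mpr h1)
  exact sub_le_iff_le_add'.mp this

/-- If two nonnegative elements are disjoint, so are their natural multiples. -/
lemma aux_inf_nsmul {a b : A} (ha : 0 ≤ a) (hb : 0 ≤ b) (hab : a ⊓ b = 0) :
    ∀ n : ℕ, a ⊓ (n • b) = 0 := by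
  intro n
  induction n with
  | zero => simpa using inf_eq_right.mpr ha
  | succ n ih =>
    have hnb : (0 : A) ≤ n • b := nsmul_nonneg hb n
    have h1 : a ⊓ ((n + 1) • b) ≤ a ⊓ (n • b) + a ⊓ b := by
      rw [succ_nsmul]
      exact aux_inf_add_le ha hnb hb
    have h2 : (0 : A) ≤ a ⊓ ((n + 1) • b) := le_inf ha (nsmul_nonneg hb _)
    rw [ih, hab, add_zero] at h1
    exact le_antisymm h1 h2

/-- `n • ` is monotone in the natural number for nonnegative elements. -/
lemma aux_nsmul_mono {a : A} (ha : 0 ≤ a) {n m : ℕ} (h : n ≤ m) :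
    n • a ≤ m • a := by
  obtain ⟨k, rfl⟩ := Nat.exists_eq_add_of_le h
  rw [add_nsmul]
  exact le_add_of_nonneg_right (nsmul_nonneg ha k)

/-- The infimum in terms of absolute value, with real scalar `2⁻¹`. -/
lemma aux_inf_eq {a b : A} : a ⊓ b = (2⁻¹ : ℝ) • (a + b - |a - b|) := by
  have habs : |a - b| = (a ⊔ b) - (a ⊓ b) := by
    rw [← sup_sub_inf_eq_abs_sub b a, sup_comm, inf_comm]
  have h1 : a + b - |a - b| = a ⊓ b + a ⊓ b := by
    rw [habs, ← inf_add_sup a b]; abel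
  rw [h1, ← two_smul ℝ (a ⊓ b), smul_smul]
  norm_num

end Aux

/-- If `T` is a conditional expectation on a Dedekind complete Riesz space `E`
with weak order unit `e`, `B` is the band generated by `0 ≤ g ∈ R(T)`, and `P`
is the band projection onto `B`, then `TP = PT`. -/
theorem condexp_commutes_band_proj {A : Type*} [AddCommGroup A] [Lattice A]
    [Module ℝ A] [CovariantClass A A (· + ·) (· ≤ ·)]
    (e : A) (he : 0 < e) (hwu : ∀ x : A, |x| ⊓ e = 0 → x = 0)
    (hDC : ∀ S : Set A, S.Nonempty → BddAbove S → ∃ a, IsLUB S a)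
    (T : A →ₗ[ℝ] A)
    (hTpos : ∀ x : A, 0 ≤ x → 0 ≤ T x)
    (hTproj : ∀ x, T (T x) = T x)
    (hTe : T e = e)
    (hTrange_abs : ∀ x, ∃ y, T y = |T x|)
    (hTcont : ∀ (S : Set A) (a : A), S.Nonempty → DirectedOn (· ≤ ·) S →
        IsLUB S a → IsLUB (T '' S) (T a))
    (g : A) (hg : 0 ≤ g) (hgR : T g = g)
    (P : A →ₗ[ℝ] A)
    (hPproj : ∀ x, P (P x) = P x)
    (hPord : ∀ x : A, 0 ≤ x → 0 ≤ P x ∧ P x ≤ x)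
    (hPband : ∀ x : A, 0 ≤ x → IsLUB {y | ∃ n : ℕ, y = x ⊓ (n • g)} (P x)) :
    T.comp P = P.comp T := by
  -- monotonicity of T and P
  have Tmono : ∀ {x y : A}, x ≤ y → T x ≤ T y := by
    intro x y hxy
    have := hTpos (y - x) (sub_nonneg.mpr hxy)
    rw [map_sub] at this
    exact sub_nonneg.mp this
  have Pmono : ∀ {x y : A}, x ≤ y → P x ≤ P y := by
    intro x y hxy
    have := (hPord (y - x) (sub_nonneg.mpr hxy)).1
    rw [map_sub] at this
    exact sub_nonneg.mp this
  -- the band-generating sets are nonempty and directed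
  have Sne : ∀ (x b : A), Set.Nonempty {y | ∃ n : ℕ, y = x ⊓ (n • b)} :=
    fun x b => ⟨x ⊓ (0 • b), 0, rfl⟩
  have Sdir : ∀ (x b : A), 0 ≤ b → DirectedOn (· ≤ ·) {y | ∃ n : ℕ, y = x ⊓ (n • b)} := by
    rintro x b hb _ ⟨n, rfl⟩ _ ⟨m, rfl⟩
    exact ⟨x ⊓ (max n m • b), ⟨max n m, rfl⟩,
      inf_le_inf_left x (aux_nsmul_mono hb (le_max_left n m)),
      inf_le_inf_left x (aux_nsmul_mono hb (le_max_right n m))⟩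
  -- Archimedean property, from Dedekind completeness
  have arch : ∀ c h : A, 0 ≤ c → (∀ n : ℕ, n • c ≤ h) → c = 0 := by
    intro c h hc hch
    obtain ⟨s, hs⟩ := hDC {y | ∃ n : ℕ, y = n • c} ⟨0 • c, 0, rfl⟩
      ⟨h, by rintro _ ⟨n, rfl⟩; exact hch n⟩
    have hle : ∀ n : ℕ, n • c ≤ s - c := by
      intro n
      have : (n + 1) • c ≤ s := hs.1 ⟨n + 1, rfl⟩
      rw [succ_nsmul] at this
      exact le_sub_iff_add_le.mpr this
    have : s ≤ s - c := hs.2 (by rintro _ ⟨n, rfl⟩; exact hle n)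
    have hc0 : c ≤ 0 := (add_le_iff_nonpos_right s).mp (le_sub_iff_add_le.mp this)
    exact le_antisymm hc0 hc
  -- weak order unit: every nonneg element is the lub of its truncations by e
  have wulub : ∀ h : A, 0 ≤ h → IsLUB {y | ∃ n : ℕ, y = h ⊓ (n • e)} h := by
    intro h hh
    obtain ⟨a, ha⟩ := hDC {y | ∃ n : ℕ, y = h ⊓ (n • e)} (Sne h e)
      ⟨h, by rintro _ ⟨n, rfl⟩; exact inf_le_left⟩
    have hah : a ≤ h := ha.2 (by rintro _ ⟨n, rfl⟩; exact inf_le_left)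
    set c := (h - a) ⊓ e with hcdef
    have hc0 : 0 ≤ c := le_inf (sub_nonneg.mpr hah) he.le
    have hkey : ∀ n : ℕ, n • c ≤ h := by
      intro n
      induction n with
      | zero => simpa using hh
      | succ n ih =>
        have h1 : n • c ≤ n • e := by
          apply nsmul_le_nsmul_right
          exact inf_le_right
        have h2 : n • c ≤ h ⊓ (n • e) := le_inf ih h1
        have h3 : h ⊓ (n • e) ≤ a := ha.1 ⟨n, rfl⟩
        have h4 : c ≤ h - a := inf_le_left
        have : n • c ≤ h - c := by
          calc n • c ≤ a := le_trans h2 h3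
          _ ≤ h - c := le_sub_comm.mpr h4
        rw [succ_nsmul]
        exact le_sub_iff_add_le.mp this
    have hc : c = 0 := arch c h hc0 hkey
    have hha : h - a = 0 := by
      apply hwu
      rwa [abs_of_nonneg (sub_nonneg.mpr hah)]
    have : a = h := (sub_eq_zero.mp hha).symm
    rwa [this] at ha
  -- every truncation e ⊓ n•g is fixed by T
  have Tfix_inf : ∀ n : ℕ, T (e ⊓ (n • g)) = e ⊓ (n • g) := by
    intro n
    obtain ⟨y, hy⟩ := hTrange_abs (e - n • g)
    have hTng : T (n • g) = n • g := by rw [map_nsmul, hgR]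
    have hy' : T y = |e - n • g| := by
      rw [hy, map_sub, hTe, hTng]
    have hz : T ((2⁻¹ : ℝ) • (e + n • g - y)) = e ⊓ (n • g) := by
      rw [map_smul, map_sub, map_add, hTe, hTng, hy', ← aux_inf_eq]
    calc T (e ⊓ (n • g)) = T (T ((2⁻¹ : ℝ) • (e + n • g - y))) := by rw [hz]
    _ = T ((2⁻¹ : ℝ) • (e + n • g - y)) := hTproj _
    _ = e ⊓ (n • g) := hz
  -- w = P e is fixed by T
  set w := P e with hwdef
  have hw0 : 0 ≤ w := (hPord e he.le).1
  have hwe : w ≤ e := (hPord e he.le).2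
  have hwlub : IsLUB {y | ∃ n : ℕ, y = e ⊓ (n • g)} w := hPband e he.le
  have hTw : T w = w := by
    have himg : T '' {y | ∃ n : ℕ, y = e ⊓ (n • g)} = {y | ∃ n : ℕ, y = e ⊓ (n • g)} := by
      ext y
      constructor
      · rintro ⟨_, ⟨n, rfl⟩, rfl⟩
        exact ⟨n, Tfix_inf n⟩
      · rintro ⟨n, rfl⟩
        exact ⟨e ⊓ (n • g), ⟨n, rfl⟩, Tfix_inf n⟩
    have := hTcont _ w (Sne e g) (Sdir e g hg) hwlub
    rw [himg] at this
    exact this.unique hwlub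
  -- P h = 0 implies h ⊓ g = 0 for 0 ≤ h
  have Pzero_inf : ∀ h : A, 0 ≤ h → P h = 0 → h ⊓ g = 0 := by
    intro h hh hPh
    have := hPband h hh
    rw [hPh] at this
    have h1 : h ⊓ (1 • g) ≤ 0 := this.1 ⟨1, rfl⟩
    rw [one_smul] at h1
    exact le_antisymm h1 (le_inf hh hg)
  -- key step 1: T (P x) is in the band, i.e. P (T (P x)) = T (P x)
  have key1 : ∀ x : A, 0 ≤ x → P (T (P x)) = T (P x) := by
    intro x hx
    have hPx0 : 0 ≤ P x := (hPord x hx).1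
    have hlub : IsLUB {y | ∃ n : ℕ, y = x ⊓ (n • g)} (P x) := hPband x hx
    have hTlub : IsLUB (T '' {y | ∃ n : ℕ, y = x ⊓ (n • g)}) (T (P x)) :=
      hTcont _ _ (Sne x g) (Sdir x g hg) hlub
    have hTPx0 : 0 ≤ T (P x) := hTpos _ hPx0
    refine le_antisymm ((hPord _ hTPx0).2) ?_
    apply hTlub.2
    rintro _ ⟨_, ⟨n, rfl⟩, rfl⟩
    set t := T (x ⊓ (n • g)) with htdef
    have ht0 : 0 ≤ t := hTpos _ (le_inf hx (nsmul_nonneg hg n))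
    have htng : t ≤ n • g := by
      have : T (x ⊓ (n • g)) ≤ T (n • g) := Tmono inf_le_right
      rwa [map_nsmul, hgR] at this
    have hPt : P t = t := by
      refine le_antisymm ((hPord t ht0).2) ?_
      have hmem : t ⊓ (n • g) ∈ {y | ∃ m : ℕ, y = t ⊓ (m • g)} := ⟨n, rfl⟩
      have := (hPband t ht0).1 hmem
      rwa [inf_eq_left.mpr htng] at this
    have htle : t ≤ T (P x) := hTlub.1 ⟨x ⊓ (n • g), ⟨n, rfl⟩, rfl⟩
    calc t = P t := hPt.symm
    _ ≤ P (T (P x)) := Pmono htle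
  -- key step 2: if 0 ≤ h and P h = 0 then P (T h) = 0
  have key2 : ∀ h : A, 0 ≤ h → P h = 0 → P (T h) = 0 := by
    intro h hh hPh
    have hhg : h ⊓ g = 0 := Pzero_inf h hh hPh
    -- h is disjoint from w
    have hhw : h ⊓ w = 0 := by
      have hlub := aux_isLUB_inf h hwlub
      -- every element of the image is 0
      have hzero : ∀ z ∈ (fun s => s ⊓ h) '' {y | ∃ n : ℕ, y = e ⊓ (n • g)}, z = 0 := by
        rintro _ ⟨_, ⟨n, rfl⟩, rfl⟩
        have h1 : e ⊓ (n • g) ⊓ h ≤ h ⊓ (n • g) :=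
          le_inf inf_le_right (le_trans inf_le_left inf_le_right)
        have h2 : h ⊓ (n • g) = 0 := aux_inf_nsmul hh hg hhg n
        have h3 : (0:A) ≤ e ⊓ (n • g) ⊓ h :=
          le_inf (le_inf he.le (nsmul_nonneg hg n)) hh
        exact le_antisymm (h2 ▸ h1) h3
      have : IsLUB ((fun s => s ⊓ h) '' {y | ∃ n : ℕ, y = e ⊓ (n • g)}) 0 := by
        constructor
        · intro z hz; rw [hzero z hz]
        · intro u hu
          have : (0:A) ∈ (fun s => s ⊓ h) '' {y | ∃ n : ℕ, y = e ⊓ (n • g)} := by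
            refine ⟨e ⊓ (0 • g), ⟨0, rfl⟩, ?_⟩
            have : e ⊓ ((0:ℕ) • g) = 0 := by simpa using inf_eq_right.mpr he.le
            rw [this]
            simpa using inf_eq_left.mpr hh
          exact hu this
      rw [inf_comm]
      exact hlub.unique this
    -- e - w is disjoint from g
    have hewg : (e - w) ⊓ g = 0 := by
      apply Pzero_inf (e - w) (sub_nonneg.mpr hwe)
      rw [map_sub, hPproj]
      simp
    -- h is the lub of its truncations by e - w
    have heq : ∀ n : ℕ, h ⊓ (n • e) = h ⊓ (n • (e - w)) := by
      intro n
      apply le_antisymm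
      · have h1 : h ⊓ (n • e) ≤ h ⊓ (n • (e - w)) + h ⊓ (n • w) := by
          have : n • e = n • (e - w) + n • w := by rw [← nsmul_add]; congr 1; abel
          rw [this]
          exact aux_inf_add_le hh (nsmul_nonneg (sub_nonneg.mpr hwe) n) (nsmul_nonneg hw0 n)
        have h2 : h ⊓ (n • w) = 0 := aux_inf_nsmul hh hw0 hhw n
        rw [h2, add_zero] at h1
        exact h1
      · exact inf_le_inf_left h (nsmul_le_nsmul_right (sub_le_self e hw0) n)
    have hlubh : IsLUB {y | ∃ n : ℕ, y = h ⊓ (n • (e - w))} h := by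
      have h1 := wulub h hh
      have : {y | ∃ n : ℕ, y = h ⊓ (n • e)} = {y | ∃ n : ℕ, y = h ⊓ (n • (e - w))} := by
        ext y
        constructor
        · rintro ⟨n, rfl⟩; exact ⟨n, heq n⟩
        · rintro ⟨n, rfl⟩; exact ⟨n, (heq n).symm⟩
      rwa [this] at h1
    -- T h is the lub of the images
    have hTlub : IsLUB (T '' {y | ∃ n : ℕ, y = h ⊓ (n • (e - w))}) (T h) :=
      hTcont _ _ (Sne h (e - w)) (Sdir h (e - w) (sub_nonneg.mpr hwe)) hlubh
    -- each image element is disjoint from g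
    have himg0 : ∀ z ∈ (fun s => s ⊓ g) '' (T '' {y | ∃ n : ℕ, y = h ⊓ (n • (e - w))}),
        z = 0 := by
      rintro _ ⟨_, ⟨_, ⟨n, rfl⟩, rfl⟩, rfl⟩
      set t := T (h ⊓ (n • (e - w))) with htdef
      have ht0 : 0 ≤ t := hTpos _ (le_inf hh (nsmul_nonneg (sub_nonneg.mpr hwe) n))
      have htle : t ≤ n • (e - w) := by
        have h1 : T (h ⊓ (n • (e - w))) ≤ T (n • (e - w)) := Tmono inf_le_right
        rwa [map_nsmul, map_sub, hTe, hTw] at h1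
      have h2 : t ⊓ g ≤ (n • (e - w)) ⊓ g := inf_le_inf_right g htle
      have h3 : g ⊓ (n • (e - w)) = 0 :=
        aux_inf_nsmul hg (sub_nonneg.mpr hwe) (by rw [inf_comm]; exact hewg) n
      rw [inf_comm] at h3
      rw [h3] at h2
      exact le_antisymm h2 (le_inf ht0 hg)
    -- hence T h ⊓ g = 0
    have hThg : T h ⊓ g = 0 := by
      have hlub2 := aux_isLUB_inf g hTlub
      have : IsLUB ((fun s => s ⊓ g) '' (T '' {y | ∃ n : ℕ, y = h ⊓ (n • (e - w))})) 0 := by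
        constructor
        · intro z hz; rw [himg0 z hz]
        · intro u hu
          have hmem : (0:A) ∈ (fun s => s ⊓ g) ''
              (T '' {y | ∃ n : ℕ, y = h ⊓ (n • (e - w))}) := by
            refine ⟨T (h ⊓ ((0:ℕ) • (e - w))), ⟨h ⊓ ((0:ℕ) • (e - w)), ⟨0, rfl⟩, rfl⟩, ?_⟩
            have h0 : h ⊓ ((0:ℕ) • (e - w)) = 0 := by simpa using inf_eq_right.mpr hh
            rw [h0, map_zero]
            simpa using inf_eq_left.mpr hg
          exact hu hmem
      exact hlub2.unique this
    -- hence P (T h) = 0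
    have hTh0 : 0 ≤ T h := hTpos h hh
    have := hPband (T h) hTh0
    apply le_antisymm
    · apply this.2
      rintro _ ⟨n, rfl⟩
      have := aux_inf_nsmul hTh0 hg hThg n
      rw [this]
    · exact (hPord _ hTh0).1
  -- key: P (T x) = T (P x) for 0 ≤ x
  have key : ∀ x : A, 0 ≤ x → P (T x) = T (P x) := by
    intro x hx
    set h := x - P x with hhdef
    have hh0 : 0 ≤ h := sub_nonneg.mpr (hPord x hx).2
    have hPh : P h = 0 := by rw [hhdef, map_sub, hPproj, sub_self]
    have hx' : x = P x + h := by rw [hhdef]; abel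
    calc P (T x) = P (T (P x + h)) := by rw [← hx']
    _ = P (T (P x)) + P (T h) := by rw [map_add, map_add]
    _ = T (P x) + 0 := by rw [key1 x hx, key2 h hh0 hPh]
    _ = T (P x) := add_zero _
  -- conclude by linearity
  ext x
  simp only [LinearMap.comp_apply]
  have hdec : x = x⁺ - x⁻ := (posPart_sub_negPart x).symm
  have h1 : T (P x) = T (P x⁺) - T (P x⁻) := by
    conv_lhs => rw [hdec]
    rw [map_sub, map_sub]
  have h2 : P (T x) = P (T x⁺) - P (T x⁻) := by
    conv_lhs => rw [hdec]
    rw [map_sub, map_sub]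
  rw [h1, h2, key x⁺ (posPart_nonneg x), key x⁻ (negPart_nonneg x)]
end
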